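/- Let ψ_n ∈ 𝓥, n ∈ ℕ, let ψ ∈ L^∞(E, ν), and assume that ψ_n ρ s-converges to ψρ for every ρ ∈ 𝓒. If φ_n ∈ 𝓒 w-converges to φ ∈ L²(E, ν), then φ_n ψ_n w-converges to φψ. -/

import Mathlib

open MeasureTheory Filter Topology

noncomputable section

namespace Mosco

variable {E : Type*} [MeasurableSpace E]

/-- The inner product of two real-valued functions with respect to a measure,
`⟨φ, ψ⟩ = ∫ φ ψ dμ`. -/
def ip (μ : Measure E) (φ ψ : E → ℝ) : ℝ := ∫ x, φ x * ψ x ∂μ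

/-- The framework of Section 2.1: mutually singular probability measures `ν n`, `n : ℕ`
(`ν 0` playing the role of the limit measure `ν`), such that `L²(E, ν 0)` is separable,
together with disjoint sets `En n` carrying `ν n`, and a linear subset `F = 𝓕 ⊆ 𝓓`
which is dense in `L²(E, ν 0)`. -/
structure Frame (E : Type*) [MeasurableSpace E] where
  ν : ℕ → Measure E
  prob : ∀ n, IsProbabilityMeasure (ν n)
  singular : ∀ m n, m ≠ n → (ν m).MutuallySingular (ν n)
  separableL2 : TopologicalSpace.SeparableSpace (Lp ℝ 2 (ν 0))
  En : ℕ → Set E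
  measEn : ∀ n, MeasurableSet (En n)
  disjEn : ∀ m n, m ≠ n → Disjoint (En m) (En n)
  nullEn : ∀ n, ν n (En n)ᶜ = 0
  F : Set (E → ℝ)
  F_measurable : ∀ φ ∈ F, Measurable φ
  F_memL2 : ∀ φ ∈ F, ∀ n, MemLp φ 2 (ν n)
  F_tendsto : ∀ φ ∈ F, Tendsto (fun n => ip (ν n) φ φ) atTop (𝓝 (ip (ν 0) φ φ))
  F_linear : ∀ φ ∈ F, ∀ ψ ∈ F, ∀ a b : ℝ, (fun x => a * φ x + b * ψ x) ∈ F
  F_dense : ∀ f : E → ℝ, Measurable f → MemLp f 2 (ν 0) → ∀ ε : ℝ, 0 < ε →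
    ∃ φ ∈ F, ip (ν 0) (fun x => f x - φ x) (fun x => f x - φ x) < ε

/-- The set `𝓓`: everywhere defined measurable functions lying in every `L²(E, ν n)`
whose `ν n`-norms converge to the `ν 0`-norm. -/
def Frame.D (fr : Frame E) : Set (E → ℝ) :=
  {φ | Measurable φ ∧ (∀ n, MemLp φ 2 (fr.ν n)) ∧
    Tendsto (fun n => ip (fr.ν n) φ φ) atTop (𝓝 (ip (fr.ν 0) φ φ))}

/-- The set `𝓒`: elements of `𝓓` satisfying conditions (c1) and (c2). -/
def Frame.C (fr : Frame E) : Set (E → ℝ) :=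
  {φ | φ ∈ fr.D ∧ (∀ n, 1 ≤ n → ∃ g ∈ fr.F, φ =ᵐ[fr.ν n] g) ∧
    ∀ ψ ∈ fr.F, Tendsto (fun n => ip (fr.ν n) φ ψ) atTop (𝓝 (ip (fr.ν 0) φ ψ))}

/-- The set `𝓥` of multipliers mapping `𝓓` into `𝓓` and `𝓕` into `𝓕`. -/
def Frame.V (fr : Frame E) : Set (E → ℝ) :=
  {ψ | Measurable ψ ∧ (∀ n, MemLp ψ 2 (fr.ν n)) ∧
    (∀ σ ∈ fr.D, (fun x => σ x * ψ x) ∈ fr.D) ∧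
    (∀ τ ∈ fr.F, (fun x => τ x * ψ x) ∈ fr.F)}

/-- `w`-convergence of a sequence `φs` (with `φs n` regarded as an element of
`L²(E, ν n)`) to `φ ∈ L²(E, ν 0)`. -/
def Frame.WConv (fr : Frame E) (φs : ℕ → E → ℝ) (φ : E → ℝ) : Prop :=
  ∀ ψ ∈ fr.C, Tendsto (fun n => ip (fr.ν n) (φs n) ψ) atTop (𝓝 (ip (fr.ν 0) φ ψ))

/-- `s`-convergence: `w`-convergence together with convergence of the norms. -/
def Frame.SConv (fr : Frame E) (φs : ℕ → E → ℝ) (φ : E → ℝ) : Prop :=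
  fr.WConv φs φ ∧
  Tendsto (fun n => ip (fr.ν n) (φs n) (φs n)) atTop (𝓝 (ip (fr.ν 0) φ φ))

/-! ### Auxiliary lemmas about `ip` -/

section IpLemmas

variable {μ : Measure E} {f f' g g' h : E → ℝ}

lemma ip_nonneg (μ : Measure E) (f : E → ℝ) : 0 ≤ ip μ f f :=
  integral_nonneg fun x => mul_self_nonneg _

lemma ip_congr_ae (hf : f =ᵐ[μ] f') (hg : g =ᵐ[μ] g') : ip μ f g = ip μ f' g' :=
  integral_congr_ae (hf.mul hg)

lemma ip_integrable_mul (hf : MemLp f 2 μ) (hg : MemLp g 2 μ) :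
    Integrable (fun x => f x * g x) μ := by
  have h := MeasureTheory.L2.integrable_inner (𝕜 := ℝ) (hf.toLp f) (hg.toLp g)
  refine h.congr ?_
  filter_upwards [hf.coeFn_toLp, hg.coeFn_toLp] with x h1 h2
  simp [h1, h2, mul_comm]

lemma ip_eq_inner (hf : MemLp f 2 μ) (hg : MemLp g 2 μ) :
    ip μ f g = (inner ℝ (hf.toLp f) (hg.toLp g) : ℝ) := by
  rw [MeasureTheory.L2.inner_def]
  refine integral_congr_ae ?_
  filter_upwards [hf.coeFn_toLp, hg.coeFn_toLp] with x h1 h2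
  simp [h1, h2, mul_comm]

lemma ip_cauchy_schwarz (hf : MemLp f 2 μ) (hg : MemLp g 2 μ) :
    |ip μ f g| ≤ Real.sqrt (ip μ f f) * Real.sqrt (ip μ g g) := by
  rw [ip_eq_inner hf hg, ip_eq_inner hf hf, ip_eq_inner hg hg,
    real_inner_self_eq_norm_mul_norm, real_inner_self_eq_norm_mul_norm,
    Real.sqrt_mul_self (norm_nonneg _), Real.sqrt_mul_self (norm_nonneg _)]
  exact abs_real_inner_le_norm _ _

lemma ip_comm (μ : Measure E) (f g : E → ℝ) : ip μ f g = ip μ g f := by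
  simp only [ip, mul_comm]

lemma ip_smul_smul (μ : Measure E) (c d : ℝ) (f g : E → ℝ) :
    ip μ (fun x => c * f x) (fun x => d * g x) = (c * d) * ip μ f g := by
  simp only [ip]
  rw [show (fun x => (c * f x) * (d * g x)) = fun x => (c * d) * (f x * g x) from
    funext fun x => by ring]
  exact integral_const_mul _ _

lemma ip_sub_right (hf : MemLp f 2 μ) (hg : MemLp g 2 μ) (hh : MemLp h 2 μ) :
    ip μ f (fun x => g x - h x) = ip μ f g - ip μ f h := by
  have e1 : ip μ f (fun x => g x - h x)
      = (inner ℝ (hf.toLp f) ((hg.sub hh).toLp (fun x => g x - h x)) : ℝ) :=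
    ip_eq_inner hf (hg.sub hh)
  have e2 : (hg.sub hh).toLp (fun x => g x - h x) = hg.toLp g - hh.toLp h :=
    MemLp.toLp_sub hg hh
  rw [e1, e2, inner_sub_right, ← ip_eq_inner hf hg, ← ip_eq_inner hf hh]

lemma ip_sub_sub (hf : MemLp f 2 μ) (hg : MemLp g 2 μ) :
    ip μ (fun x => f x - g x) (fun x => f x - g x)
      = ip μ f f - 2 * ip μ f g + ip μ g g := by
  have e1 : ip μ (fun x => f x - g x) (fun x => f x - g x)
      = (inner ℝ ((hf.sub hg).toLp (fun x => f x - g x))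
          ((hf.sub hg).toLp (fun x => f x - g x)) : ℝ) :=
    ip_eq_inner (hf.sub hg) (hf.sub hg)
  have e2 : (hf.sub hg).toLp (fun x => f x - g x) = hf.toLp f - hg.toLp g :=
    MemLp.toLp_sub hf hg
  rw [e1, e2, real_inner_sub_sub_self, ← ip_eq_inner hf hf, ← ip_eq_inner hf hg,
    ← ip_eq_inner hg hg]

lemma ip_add_add (hf : MemLp f 2 μ) (hg : MemLp g 2 μ) :
    ip μ (fun x => f x + g x) (fun x => f x + g x)
      = ip μ f f + 2 * ip μ f g + ip μ g g := by
  have e1 : ip μ (fun x => f x + g x) (fun x => f x + g x)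
      = (inner ℝ ((hf.add hg).toLp (fun x => f x + g x))
          ((hf.add hg).toLp (fun x => f x + g x)) : ℝ) :=
    ip_eq_inner (hf.add hg) (hf.add hg)
  have e2 : (hf.add hg).toLp (fun x => f x + g x) = hf.toLp f + hg.toLp g :=
    MemLp.toLp_add hf hg
  rw [e1, e2, real_inner_add_add_self, ← ip_eq_inner hf hf, ← ip_eq_inner hf hg,
    ← ip_eq_inner hg hg]

end IpLemmas

/-! ### Auxiliary lemmas about `Frame` -/

section FrameLemmas

variable {fr : Frame E} {φ ψ : E → ℝ}

lemma Frame.smul_mem_F (fr : Frame E) (hφ : φ ∈ fr.F) (c : ℝ) :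
    (fun x => c * φ x) ∈ fr.F := by
  simpa using fr.F_linear φ hφ φ hφ c 0

lemma Frame.zero_mem_F (fr : Frame E) (hφ : φ ∈ fr.F) :
    (fun _ : E => (0 : ℝ)) ∈ fr.F := by
  simpa using fr.F_linear φ hφ φ hφ 0 0

lemma Frame.F_subset_C (fr : Frame E) (hφ : φ ∈ fr.F) : φ ∈ fr.C := by
  refine ⟨⟨fr.F_measurable φ hφ, fr.F_memL2 φ hφ, fr.F_tendsto φ hφ⟩,
    fun n _ => ⟨φ, hφ, EventuallyEq.rfl⟩, fun ψ hψ => ?_⟩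
  have hsum : (fun x => φ x + ψ x) ∈ fr.F := by
    simpa using fr.F_linear φ hφ ψ hψ 1 1
  have h1 := fr.F_tendsto _ hsum
  have h2 := fr.F_tendsto _ hφ
  have h3 := fr.F_tendsto _ hψ
  have key : ∀ m, ip (fr.ν m) φ ψ =
      (ip (fr.ν m) (fun x => φ x + ψ x) (fun x => φ x + ψ x)
        - ip (fr.ν m) φ φ - ip (fr.ν m) ψ ψ) / 2 := by
    intro m
    rw [ip_add_add (fr.F_memL2 φ hφ m) (fr.F_memL2 ψ hψ m)]
    ring
  simp only [key]
  exact ((h1.sub h2).sub h3).div_const 2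

end FrameLemmas

/-- Any `w`-convergent sequence in `𝓒` has uniformly bounded norms. -/
lemma Frame.bounded_of_wconv (fr : Frame E) (φs : ℕ → E → ℝ) (hφs : ∀ n, φs n ∈ fr.C)
    (φ : E → ℝ) (hw : fr.WConv φs φ) :
    ∃ M : ℝ, ∀ n, Real.sqrt (ip (fr.ν n) (φs n) (φs n)) ≤ M := by
  by_contra hM
  push_neg at hM
  set b : ℕ → ℝ := fun m => Real.sqrt (ip (fr.ν m) (φs m) (φs m)) with hbdef
  have hb0 : ∀ m, 0 ≤ b m := fun m => Real.sqrt_nonneg _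
  -- extract a strictly monotone subsequence along which the norms blow up
  have hfreq : ∀ k : ℕ, ∃ᶠ m in atTop, ((k : ℝ) + 2 < b m ∧ 1 ≤ m) := by
    intro k
    rw [Filter.frequently_atTop]
    intro N
    obtain ⟨m, hm0⟩ := hM ((k : ℝ) + 2 + ∑ j ∈ Finset.range (N + 1), b j)
    have hm : (k : ℝ) + 2 + ∑ j ∈ Finset.range (N + 1), b j < b m := hm0
    have hsum_le : ∀ j, j ≤ N → b j ≤ ∑ j ∈ Finset.range (N + 1), b j := by
      intro j hj
      exact Finset.single_le_sum (fun i _ => hb0 i)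
        (Finset.mem_range.2 (Nat.lt_succ_of_le hj))
    have hk2 : (0 : ℝ) ≤ (k : ℝ) + 2 := by positivity
    have hsumnn : (0:ℝ) ≤ ∑ j ∈ Finset.range (N + 1), b j :=
      Finset.sum_nonneg fun i _ => hb0 i
    have hmN : N ≤ m := by
      by_contra hlt
      push_neg at hlt
      have := hsum_le m (le_of_lt hlt)
      linarith
    have hm1 : 1 ≤ m := by
      rcases Nat.eq_zero_or_pos m with rfl | h
      · have := hsum_le 0 (Nat.zero_le N)
        linarith
      · exact h
    exact ⟨m, hmN, by linarith, hm1⟩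
  obtain ⟨n, hmono, hn⟩ := Filter.extraction_forall_of_frequently hfreq
  have hbig : ∀ k : ℕ, (k : ℝ) + 2 < b (n k) := fun k => (hn k).1
  have hnk1 : ∀ k, 1 ≤ n k := fun k => (hn k).2
  have hbpos : ∀ k, 0 < b (n k) := fun k => lt_of_le_of_lt (by positivity) (hbig k)
  -- choose `F`-representatives
  choose G hGF hGae using fun k => (hφs (n k)).2.1 (n k) (hnk1 k)
  -- coefficients
  set t : ℕ → ℝ := fun k => 1 / (b (n k) * Real.sqrt (b (n k))) with htdef
  have hsqb : ∀ k, Real.sqrt (b (n k)) * Real.sqrt (b (n k)) = b (n k) :=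
    fun k => Real.mul_self_sqrt (hb0 (n k))
  have hsqbpos : ∀ k, 0 < Real.sqrt (b (n k)) := fun k => Real.sqrt_pos.2 (hbpos k)
  -- the glued test function
  set f : ℕ → E → ℝ := fun k => (fr.En (n k)).indicator (fun y => t k * G k y) with hfdef
  set χ : E → ℝ := fun x => ∑' k, f k x with hχdef
  have hfmeas : ∀ k, Measurable (f k) :=
    fun k => ((fr.F_measurable _ (hGF k)).const_mul (t k)).indicator (fr.measEn (n k))
  have hzero_off : ∀ (x : E) (k : ℕ), x ∉ fr.En (n k) → f k x = 0 :=
    fun x k hx => Set.indicator_of_notMem hx _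
  have hf_single : ∀ (x : E) (k0 : ℕ), x ∈ fr.En (n k0) → ∀ j ≠ k0, f j x = 0 := by
    intro x k0 hx j hj
    refine hzero_off x j fun hxj => ?_
    have hdisj := fr.disjEn (n j) (n k0) (fun h => hj (hmono.injective h))
    exact Set.disjoint_left.1 hdisj hxj hx
  have hhasSum : ∀ x : E, HasSum (fun k => f k x) (χ x) := by
    intro x
    by_cases hx : ∃ k, x ∈ fr.En (n k)
    · obtain ⟨k0, hk0⟩ := hx
      have hs : HasSum (fun k => f k x) (f k0 x) :=
        hasSum_single k0 (hf_single x k0 hk0)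
      simpa [hχdef] using hs.tsum_eq ▸ hs
    · push_neg at hx
      have hzero : (fun k => f k x) = fun _ => 0 :=
        funext fun k => hzero_off x k (hx k)
      have : χ x = 0 := by simp [hχdef, hzero]
      rw [this, hzero]
      exact hasSum_zero
  have hχ_meas : Measurable χ := by
    refine measurable_of_tendsto_metrizable
      (f := fun K x => ∑ k ∈ Finset.range K, f k x)
      (fun K => Finset.measurable_sum _ fun k _ => hfmeas k) ?_
    rw [tendsto_pi_nhds]
    exact fun x => (hhasSum x).tendsto_sum_nat
  -- a.e. identification of χ under each measure
  have hae_mem : ∀ m, ∀ᵐ x ∂(fr.ν m), x ∈ fr.En m := by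
    intro m
    rw [MeasureTheory.ae_iff]
    exact fr.nullEn m
  have hχ_ae : ∀ k, χ =ᵐ[fr.ν (n k)] fun x => t k * G k x := by
    intro k
    filter_upwards [hae_mem (n k)] with x hx
    have hs : HasSum (fun j => f j x) (f k x) := hasSum_single k (hf_single x k hx)
    have : χ x = f k x := ((hhasSum x).unique hs)
    rw [this, hfdef]
    exact Set.indicator_of_mem hx _
  have hχ_ae0 : ∀ m, (∀ k, n k ≠ m) → χ =ᵐ[fr.ν m] fun _ => (0 : ℝ) := by
    intro m hm
    filter_upwards [hae_mem m] with x hx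
    have hxk : ∀ k, x ∉ fr.En (n k) := by
      intro k hxk
      exact Set.disjoint_left.1 (fr.disjEn (n k) m (hm k)) hxk hx
    have hzero : (fun k => f k x) = fun _ => 0 := funext fun k => hzero_off x k (hxk k)
    simp [hχdef, hzero]
  -- membership in L² for every measure
  have hχ_L2 : ∀ m, MemLp χ 2 (fr.ν m) := by
    intro m
    haveI := fr.prob m
    by_cases hm : ∃ k, n k = m
    · obtain ⟨k, rfl⟩ := hm
      exact (MemLp.const_mul (fr.F_memL2 _ (hGF k) (n k)) (t k)).ae_eq (hχ_ae k).symm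
    · push_neg at hm
      exact (memLp_const (0 : ℝ)).ae_eq (hχ_ae0 m hm).symm
  -- values of the inner products
  have hGGval : ∀ k, ip (fr.ν (n k)) (G k) (G k) = b (n k) * b (n k) := by
    intro k
    rw [← ip_congr_ae (hGae k) (hGae k)]
    simp only [hbdef]
    exact (Real.mul_self_sqrt (ip_nonneg _ _)).symm
  have hipχχ : ∀ k, ip (fr.ν (n k)) χ χ = 1 / b (n k) := by
    intro k
    rw [ip_congr_ae (hχ_ae k) (hχ_ae k), ip_smul_smul, hGGval k]
    simp only [htdef]
    have h1 : b (n k) ≠ 0 := ne_of_gt (hbpos k)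
    have h2 : Real.sqrt (b (n k)) ≠ 0 := ne_of_gt (hsqbpos k)
    field_simp
    nlinarith [hsqb k, hbpos k, hsqbpos k]
  have hipφχ : ∀ k, ip (fr.ν (n k)) (φs (n k)) χ = Real.sqrt (b (n k)) := by
    intro k
    have heq : ip (fr.ν (n k)) (φs (n k)) χ
        = ip (fr.ν (n k)) (fun x => (1 : ℝ) * G k x) (fun x => t k * G k x) := by
      refine ip_congr_ae ?_ (hχ_ae k)
      filter_upwards [hGae k] with x hx
      simp [hx]
    rw [heq, ip_smul_smul, hGGval k]
    simp only [htdef]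
    have h1 : b (n k) ≠ 0 := ne_of_gt (hbpos k)
    have h2 : Real.sqrt (b (n k)) ≠ 0 := ne_of_gt (hsqbpos k)
    field_simp
    nlinarith [hsqb k, hbpos k, hsqbpos k]
  -- χ is ν 0-a.e. zero
  have hn0 : ∀ k, n k ≠ 0 := fun k => Nat.one_le_iff_ne_zero.mp (hnk1 k)
  have hχ00 : ip (fr.ν 0) χ χ = 0 := by
    rw [ip_congr_ae (hχ_ae0 0 hn0) (hχ_ae0 0 hn0)]
    simp [ip]
  have hχ_tendsto : Tendsto (fun m => ip (fr.ν m) χ χ) atTop (𝓝 (ip (fr.ν 0) χ χ)) := by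
    rw [hχ00, Metric.tendsto_atTop]
    intro ε hε
    obtain ⟨K, hK⟩ := exists_nat_gt (1 / ε)
    refine ⟨n K + 1, fun m hm => ?_⟩
    rw [Real.dist_eq, sub_zero]
    by_cases hmk : ∃ k, n k = m
    · obtain ⟨k, rfl⟩ := hmk
      have hkK : K < k := by
        by_contra hkK'
        push_neg at hkK'
        have := hmono.le_iff_le.mpr hkK'
        omega
      rw [hipχχ k, abs_of_nonneg (by positivity)]
      have hble : 1 / ε < b (n k) := by
        have hKk : (K : ℝ) ≤ (k : ℝ) := by exact_mod_cast hkK.le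
        calc 1 / ε < (K : ℝ) := hK
          _ ≤ (k : ℝ) + 2 := by linarith
          _ < b (n k) := hbig k
      rw [div_lt_iff₀ (hbpos k)]
      rw [div_lt_iff₀ hε] at hble
      nlinarith
    · push_neg at hmk
      rw [ip_congr_ae (hχ_ae0 m hmk) (hχ_ae0 m hmk)]
      simpa [ip] using hε
  -- χ belongs to 𝓒
  have hχC : χ ∈ fr.C := by
    refine ⟨⟨hχ_meas, hχ_L2, hχ_tendsto⟩, ?_, ?_⟩
    · intro m hm
      by_cases hmk : ∃ k, n k = m
      · obtain ⟨k, rfl⟩ := hmk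
        exact ⟨fun x => t k * G k x, fr.smul_mem_F (hGF k) (t k), hχ_ae k⟩
      · push_neg at hmk
        exact ⟨fun _ => 0, fr.zero_mem_F (hGF 0), hχ_ae0 m hmk⟩
    · intro ψ hψ
      obtain ⟨B, hB⟩ := ((fr.F_tendsto ψ hψ).sqrt).bddAbove_range
      have hB' : ∀ m, Real.sqrt (ip (fr.ν m) ψ ψ) ≤ B := fun m => hB ⟨m, rfl⟩
      have hip0 : ip (fr.ν 0) χ ψ = 0 := by
        rw [ip_congr_ae (hχ_ae0 0 hn0) (EventuallyEq.rfl (f := ψ))]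
        simp [ip]
      rw [hip0]
      have hbound : ∀ m, ‖ip (fr.ν m) χ ψ‖ ≤ Real.sqrt (ip (fr.ν m) χ χ) * B := by
        intro m
        refine le_trans (ip_cauchy_schwarz (hχ_L2 m) (fr.F_memL2 ψ hψ m)) ?_
        exact mul_le_mul_of_nonneg_left (hB' m) (Real.sqrt_nonneg _)
      have hlim : Tendsto (fun m => Real.sqrt (ip (fr.ν m) χ χ) * B) atTop (𝓝 0) := by
        have h := (hχ_tendsto.sqrt).mul_const B
        rwa [hχ00, Real.sqrt_zero, zero_mul] at h
      exact squeeze_zero_norm hbound hlim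
  -- the contradiction
  obtain ⟨B, hB⟩ := (hw χ hχC).bddAbove_range
  have hB' : ∀ k, Real.sqrt (b (n k)) ≤ B := by
    intro k
    have h : ip (fr.ν (n k)) (φs (n k)) χ ≤ B := hB ⟨n k, rfl⟩
    rwa [hipφχ k] at h
  have hB0 : 0 ≤ B := le_trans (Real.sqrt_nonneg _) (hB' 0)
  obtain ⟨k, hk⟩ := exists_nat_gt (B * B)
  have h1 : b (n k) ≤ B * B := by
    calc b (n k) = Real.sqrt (b (n k)) * Real.sqrt (b (n k)) := (hsqb k).symm
      _ ≤ B * B := mul_le_mul (hB' k) (hB' k) (Real.sqrt_nonneg _) hB0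
  have h2 := hbig k
  linarith

/-- Proposition 2.3 (f): let `ψs n ∈ 𝓥`, `ψ ∈ L^∞(E, ν)`, and assume `ψs n · ρ`
`s`-converges to `ψ · ρ` for every `ρ ∈ 𝓒`.  If `φs n ∈ 𝓒` `w`-converges to
`φ ∈ L²(E, ν)`, then `φs n · ψs n` `w`-converges to `φ · ψ`. -/
theorem wconv_mul (fr : Frame E) (ψs : ℕ → E → ℝ) (hψs : ∀ n, ψs n ∈ fr.V)
    (ψ : E → ℝ) (hψm : Measurable ψ) (hψ_inf : MemLp ψ ⊤ (fr.ν 0))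
    (hsρ : ∀ ρ ∈ fr.C, fr.SConv (fun n x => ψs n x * ρ x) (fun x => ψ x * ρ x))
    (φs : ℕ → E → ℝ) (hφs : ∀ n, φs n ∈ fr.C)
    (φ : E → ℝ) (hφm : Measurable φ) (hφ2 : MemLp φ 2 (fr.ν 0)) (hw : fr.WConv φs φ) :
    fr.WConv (fun n x => φs n x * ψs n x) (fun x => φ x * ψ x) := by
  intro ρ hρ
  have hρD := hρ.1
  have hρ2 : ∀ m, MemLp ρ 2 (fr.ν m) := hρD.2.1
  have hρmeas : Measurable ρ := hρD.1
  -- integrability facts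
  have hu2 : ∀ m, MemLp (fun x => ψs m x * ρ x) 2 (fr.ν m) := by
    intro m
    have h := ((hψs m).2.2.1 ρ hρD).2.1 m
    have e : (fun x => ψs m x * ρ x) = (fun x => ρ x * ψs m x) :=
      funext fun x => mul_comm _ _
    rw [e]; exact h
  have hφs2 : ∀ m, MemLp (φs m) 2 (fr.ν m) := fun m => (hφs m).1.2.1 m
  have hψρ2 : MemLp (fun x => ψ x * ρ x) 2 (fr.ν 0) := by
    have h : MemLp (fun x => ρ x * ψ x) 2 (fr.ν 0) :=
      MemLp.mul' (p := 2) (q := ⊤) hψ_inf (hρ2 0)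
    have e : (fun x => ψ x * ρ x) = (fun x => ρ x * ψ x) := funext fun x => mul_comm _ _
    rw [e]; exact h
  -- uniform bound on the norms of φs
  obtain ⟨M, hM⟩ := fr.bounded_of_wconv φs hφs φ hw
  have hM0 : 0 ≤ M := le_trans (Real.sqrt_nonneg _) (hM 0)
  set Cφ := Real.sqrt (ip (fr.ν 0) φ φ) with hCφ
  have hCφ0 : 0 ≤ Cφ := Real.sqrt_nonneg _
  rw [Metric.tendsto_atTop]
  intro ε hε
  set D := M + Cφ + 1 with hD
  have hDpos : 0 < D := by positivity
  set δ := ε / (2 * D) with hδdef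
  have hδpos : 0 < δ := by positivity
  -- choose an approximation χ ∈ F of ψ·ρ
  obtain ⟨χ, hχF, hχnear⟩ := fr.F_dense (fun x => ψ x * ρ x)
    (hψm.mul hρmeas) hψρ2 (δ ^ 2) (by positivity)
  have hχC := fr.F_subset_C hχF
  have hχ2 : ∀ m, MemLp χ 2 (fr.ν m) := fr.F_memL2 χ hχF
  set R := ip (fr.ν 0) (fun x => ψ x * ρ x - χ x) (fun x => ψ x * ρ x - χ x) with hRdef
  have hχnear' : R < δ ^ 2 := hχnear
  have hsqR : Real.sqrt R < δ := (Real.sqrt_lt' hδpos).2 hχnear'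
  -- convergence of the defect norms
  have hS := hsρ ρ hρ
  have hN := hS.2
  have hW := hS.1 χ hχC
  have hCχ := fr.F_tendsto χ hχF
  have hQten : Tendsto (fun m => ip (fr.ν m) (fun x => ψs m x * ρ x - χ x)
      (fun x => ψs m x * ρ x - χ x)) atTop (𝓝 R) := by
    have e1 : ∀ m, ip (fr.ν m) (fun x => ψs m x * ρ x - χ x)
        (fun x => ψs m x * ρ x - χ x)
        = ip (fr.ν m) (fun x => ψs m x * ρ x) (fun x => ψs m x * ρ x)
          - 2 * ip (fr.ν m) (fun x => ψs m x * ρ x) χ + ip (fr.ν m) χ χ :=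
      fun m => ip_sub_sub (hu2 m) (hχ2 m)
    have e0 : R = ip (fr.ν 0) (fun x => ψ x * ρ x) (fun x => ψ x * ρ x)
        - 2 * ip (fr.ν 0) (fun x => ψ x * ρ x) χ + ip (fr.ν 0) χ χ :=
      ip_sub_sub hψρ2 (hχ2 0)
    rw [e0]
    simp only [e1]
    exact (hN.sub (hW.const_mul 2)).add hCχ
  have ev1 := (hQten.sqrt).eventually_lt_const hsqR
  obtain ⟨N1, hN1⟩ := Filter.eventually_atTop.1 ev1
  obtain ⟨N2, hN2⟩ := Metric.tendsto_atTop.1 (hw χ hχC) (ε / 2) (by positivity)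
  refine ⟨max N1 N2, fun m hm => ?_⟩
  have hm1 : N1 ≤ m := le_trans (le_max_left _ _) hm
  have hm2 : N2 ≤ m := le_trans (le_max_right _ _) hm
  rw [Real.dist_eq]
  show |ip (fr.ν m) (fun x => φs m x * ψs m x) ρ
    - ip (fr.ν 0) (fun x => φ x * ψ x) ρ| < ε
  have hGm : ip (fr.ν m) (fun x => φs m x * ψs m x) ρ
      = ip (fr.ν m) (φs m) (fun x => ψs m x * ρ x) := by
    simp only [ip, mul_assoc]
  have hL : ip (fr.ν 0) (fun x => φ x * ψ x) ρ
      = ip (fr.ν 0) φ (fun x => ψ x * ρ x) := by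
    simp only [ip, mul_assoc]
  rw [hGm, hL]
  -- decomposition
  have hd1 : ip (fr.ν m) (φs m) (fun x => ψs m x * ρ x) - ip (fr.ν m) (φs m) χ
      = ip (fr.ν m) (φs m) (fun x => ψs m x * ρ x - χ x) :=
    (ip_sub_right (hφs2 m) (hu2 m) (hχ2 m)).symm
  have hd3 : ip (fr.ν 0) φ (fun x => ψ x * ρ x) - ip (fr.ν 0) φ χ
      = ip (fr.ν 0) φ (fun x => ψ x * ρ x - χ x) :=
    (ip_sub_right hφ2 hψρ2 (hχ2 0)).symm
  set X1 := ip (fr.ν m) (φs m) (fun x => ψs m x * ρ x - χ x) with hX1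
  set X2 := ip (fr.ν m) (φs m) χ - ip (fr.ν 0) φ χ with hX2
  set X3 := ip (fr.ν 0) φ (fun x => ψ x * ρ x - χ x) with hX3
  have decomp : ip (fr.ν m) (φs m) (fun x => ψs m x * ρ x)
      - ip (fr.ν 0) φ (fun x => ψ x * ρ x) = X1 + X2 - X3 := by
    rw [← hd1, ← hd3, hX2]
    ring
  rw [decomp]
  -- bounds on the three terms
  have hb1 : |X1| ≤ M * δ := by
    refine le_trans (ip_cauchy_schwarz (hφs2 m) ((hu2 m).sub (hχ2 m))) ?_
    exact mul_le_mul (hM m) (hN1 m hm1).le (Real.sqrt_nonneg _) hM0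
  have hb3 : |X3| ≤ Cφ * δ := by
    refine le_trans (ip_cauchy_schwarz hφ2 (hψρ2.sub (hχ2 0))) ?_
    exact mul_le_mul le_rfl hsqR.le (Real.sqrt_nonneg _) hCφ0
  have hb2 : |X2| < ε / 2 := by
    have h := hN2 m hm2
    rwa [Real.dist_eq] at h
  -- final arithmetic
  have hMδ : M * δ + Cφ * δ ≤ ε / 2 := by
    have h1 : (M + Cφ) * δ ≤ D * δ := by
      refine mul_le_mul_of_nonneg_right ?_ hδpos.le
      rw [hD]; linarith
    have h2 : D * δ = ε / 2 := by
      rw [hδdef]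
      field_simp
    nlinarith
  have t1 := abs_add_le (X1 + X2) (-X3)
  rw [abs_neg] at t1
  have t2 := abs_add_le X1 X2
  rw [sub_eq_add_neg]
  calc |X1 + X2 + -X3| ≤ |X1 + X2| + |X3| := t1
    _ ≤ |X1| + |X2| + |X3| := by linarith
    _ < ε := by linarith

end Mosco
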